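/- Let C be a chain complex over a field with a bounded filtration F, and let C' be another filtered complex. If a filtered chain map F: C → C' induces an isomorphism on the homology of the associated graded complexes, then F is a filtered chain homotopy equivalence. -/

import Mathlib

lemma exact_contraction {K V : Type*} [Field K] [AddCommGroup V] [Module K V]
    (d : V →ₗ[K] V) (hd2 : d ∘ₗ d = 0)
    (hex : LinearMap.ker d ≤ LinearMap.range d) :
    ∃ s : V →ₗ[K] V, ∀ x, d (s x) + s (d x) = x := by
  obtain ⟨L, hL⟩ := Submodule.exists_isCompl (LinearMap.ker d)
  set k := LinearMap.ker d with hk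
  have hdd : ∀ x : V, d (d x) = 0 := fun x => congrFun (congrArg DFunLike.coe hd2) x
  have hdL : ∀ x : V, d x ∈ k := fun x => by simp [hk, LinearMap.mem_ker, hdd]
  let f : L →ₗ[K] k := LinearMap.codRestrict k (d ∘ₗ L.subtype) (fun x => hdL x)
  have hfc : ∀ x : L, (f x : V) = d x := fun x => rfl
  have hfinj : Function.Injective f := by
    intro x y hxy
    have h1 : d ((x : V) - y) = 0 := by
      have := congrArg (fun z : k => (z : V)) hxy
      simp only [hfc] at this
      simp [map_sub, this]
    have h2 : ((x : V) - y) ∈ k ⊓ L := ⟨h1, sub_mem x.2 y.2⟩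
    rw [hL.inf_eq_bot] at h2
    exact Subtype.ext (by simpa [sub_eq_zero] using h2)
  have hfsurj : Function.Surjective f := by
    rintro ⟨z, hz⟩
    obtain ⟨y, rfl⟩ := hex hz
    set π' := Submodule.linearProjOfIsCompl L k hL.symm with hπ'
    refine ⟨π' y, Subtype.ext ?_⟩
    rw [hfc]
    show d ((π' y : V)) = d y
    have hsum : ((π' y : V)) + ((k.linearProjOfIsCompl L hL.symm.symm) y : V) = y :=
      Submodule.projection_add_projection_eq_self hL.symm y
    conv_rhs => rw [← hsum]
    rw [map_add]
    have hker : ((k.linearProjOfIsCompl L hL.symm.symm) y : V) ∈ k := SetLike.coe_mem _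
    rw [LinearMap.mem_ker.mp hker, add_zero]
  let e := LinearEquiv.ofBijective f ⟨hfinj, hfsurj⟩
  let π := Submodule.linearProjOfIsCompl k L hL
  let π' := Submodule.linearProjOfIsCompl L k hL.symm
  have hec : ∀ z : L, e z = f z := fun z => rfl
  refine ⟨L.subtype ∘ₗ (e.symm : k →ₗ[K] L) ∘ₗ π, fun x => ?_⟩
  have hsum : ((π x : V)) + ((π' x : V)) = x := by
    have : ((π x : V)) + ((π' x : V)) = x := Submodule.projection_add_projection_eq_self hL x
    simpa using this
  simp only [LinearMap.comp_apply, Submodule.subtype_apply, LinearEquiv.coe_coe]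
  -- d (s x) = π x
  have h1 : d ((e.symm (π x) : L) : V) = (π x : V) := by
    rw [← hfc, ← hec, e.apply_symm_apply]
  -- s (d x) = π' x
  have h2 : ((e.symm (π (d x)) : L) : V) = ((π' x : L) : V) := by
    have hx : d x = (f (π' x) : V) := by
      rw [hfc]
      conv_lhs => rw [← hsum]
      rw [map_add]
      have hker : (π x : V) ∈ k := SetLike.coe_mem _
      rw [LinearMap.mem_ker.mp hker, zero_add]
    have hπd : π (d x) = f (π' x) := by
      rw [hx]
      exact Submodule.linearProjOfIsCompl_apply_left hL (f (π' x))
    rw [hπd, ← hec, e.symm_apply_apply]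
  rw [h1, h2, hsum]

/-- The key step: if `A ≤ B` are `d`-stable submodules with `B/A` acyclic, there is a
"partial contraction" `σ` supported with values in `B`, vanishing on `A`, contracting mod `A`. -/
lemma partial_contraction {K V : Type*} [Field K] [AddCommGroup V] [Module K V]
    (d : V →ₗ[K] V) (hdd : ∀ x, d (d x) = 0)
    (A B : Submodule K V) (hAB : A ≤ B)
    (hdA : ∀ x ∈ A, d x ∈ A) (hdB : ∀ x ∈ B, d x ∈ B)
    (hac : ∀ x ∈ B, d x ∈ A → x ∈ A ⊔ B.map d) :
    ∃ σ : V →ₗ[K] V, (∀ x, σ x ∈ B) ∧ (∀ x ∈ A, σ x = 0) ∧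
      (∀ x ∈ B, x - d (σ x) - σ (d x) ∈ A) := by
  classical
  -- quotient complex
  let Q := V ⧸ A
  let dbar : Q →ₗ[K] Q := A.mapQ A d hdA
  have hdbar : ∀ x : V, dbar (A.mkQ x) = A.mkQ (d x) := fun x => by
    show (A.mapQ A d hdA) (Submodule.Quotient.mk x) = Submodule.Quotient.mk (d x)
    rw [Submodule.mapQ_apply]
  let E : Submodule K Q := B.map A.mkQ
  have hE : ∀ x ∈ E, dbar x ∈ E := by
    rintro x ⟨b, hb, rfl⟩
    exact ⟨d b, hdB b hb, (hdbar b).symm⟩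
  let dE : E →ₗ[K] E := dbar.restrict hE
  have hdEc : ∀ x : E, ((dE x : Q)) = dbar x := fun x => LinearMap.restrict_coe_apply _ _ _
  have hdbar2 : ∀ q : Q, dbar (dbar q) = 0 := by
    intro q
    obtain ⟨x, rfl⟩ := A.mkQ_surjective q
    rw [Submodule.mkQ_apply] at *
    rw [show Submodule.Quotient.mk x = A.mkQ x from rfl, hdbar, hdbar, hdd]
    simp
  have hdE2 : dE ∘ₗ dE = 0 := by
    ext x
    simp only [LinearMap.comp_apply, LinearMap.zero_apply]
    rw [hdEc, hdEc, hdbar2]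
    rfl
  have hexE : LinearMap.ker dE ≤ LinearMap.range dE := by
    rintro ⟨q, hq⟩ hker
    obtain ⟨b, hb, rfl⟩ := hq
    have h0 : dbar (A.mkQ b) = 0 := by
      have := congrArg (fun z : E => (z : Q)) (LinearMap.mem_ker.mp hker)
      exact (hdEc _).symm.trans this
    rw [hdbar b] at h0
    have hdbA : d b ∈ A := by
      rwa [Submodule.mkQ_apply, Submodule.Quotient.mk_eq_zero] at h0
    obtain ⟨a, ha, z, hz, hsum⟩ := Submodule.mem_sup.mp (hac b hb hdbA)
    obtain ⟨c, hc, rfl⟩ := Submodule.mem_map.mp hz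
    refine ⟨⟨A.mkQ c, ⟨c, hc, rfl⟩⟩, Subtype.ext ?_⟩
    rw [hdEc, hdbar]
    show A.mkQ (d c) = A.mkQ b
    rw [← hsum]
    simp only [map_add, Submodule.mkQ_apply]
    rw [(Submodule.Quotient.mk_eq_zero A).mpr ha, zero_add]
  obtain ⟨sE, hsE⟩ := exact_contraction dE hdE2 hexE
  -- complements
  obtain ⟨W, hW⟩ := Submodule.exists_isCompl A
  set C := W ⊓ B with hC
  have hACsup : A ⊔ C = B := by
    rw [hC, ← sup_inf_assoc_of_le W hAB, hW.codisjoint.eq_top, top_inf_eq]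
  have hACinf : ∀ x, x ∈ A → x ∈ C → x = 0 := by
    intro x hxA hxC
    have : x ∈ A ⊓ W := ⟨hxA, hxC.1⟩
    rwa [hW.inf_eq_bot, Submodule.mem_bot] at this
  have hCB : C ≤ B := inf_le_right
  -- the equivalence C ≃ E
  let fC : C →ₗ[K] E := LinearMap.codRestrict E (A.mkQ ∘ₗ C.subtype)
    (fun c => ⟨(c : V), hCB c.2, rfl⟩)
  have hfCc : ∀ c : C, ((fC c : Q)) = A.mkQ (c : V) := fun c => rfl
  have hfCinj : Function.Injective fC := by
    intro x y hxy
    have h1 : A.mkQ ((x : V) - y) = 0 := by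
      have := congrArg (fun z : E => (z : Q)) hxy
      simp only [hfCc] at this
      simp [map_sub, this]
    rw [Submodule.mkQ_apply, Submodule.Quotient.mk_eq_zero] at h1
    have := hACinf _ h1 (sub_mem x.2 y.2)
    exact Subtype.ext (by simpa [sub_eq_zero] using this)
  have hfCsurj : Function.Surjective fC := by
    rintro ⟨q, hq⟩
    obtain ⟨b, hb, rfl⟩ := hq
    rw [← hACsup] at hb
    obtain ⟨a, ha, c, hc, hsum⟩ := Submodule.mem_sup.mp hb
    refine ⟨⟨c, hc⟩, Subtype.ext ?_⟩
    rw [hfCc]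
    show A.mkQ c = A.mkQ b
    rw [← hsum]
    simp only [map_add, Submodule.mkQ_apply]
    rw [(Submodule.Quotient.mk_eq_zero A).mpr ha, zero_add]
  let eC := LinearEquiv.ofBijective fC ⟨hfCinj, hfCsurj⟩
  have heCc : ∀ c : C, eC c = fC c := fun c => rfl
  -- projection onto B
  obtain ⟨W2, hW2⟩ := Submodule.exists_isCompl B
  let πB := B.linearProjOfIsCompl W2 hW2
  have hπB : ∀ x ∈ B, ((πB x : V)) = x := by
    intro x hx
    have := Submodule.linearProjOfIsCompl_apply_left hW2 ⟨x, hx⟩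
    exact congrArg Subtype.val this
  let rB : B →ₗ[K] E := LinearMap.codRestrict E (A.mkQ ∘ₗ B.subtype)
    (fun b => ⟨(b : V), b.2, rfl⟩)
  have hrBc : ∀ b : B, ((rB b : Q)) = A.mkQ (b : V) := fun b => rfl
  let r : V →ₗ[K] E := rB ∘ₗ πB
  have hr : ∀ x ∈ B, ((r x : Q)) = A.mkQ x := by
    intro x hx
    show ((rB (πB x) : Q)) = A.mkQ x
    rw [hrBc, hπB x hx]
  let σ : V →ₗ[K] V := C.subtype ∘ₗ (eC.symm : E →ₗ[K] C) ∘ₗ sE ∘ₗ r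
  have hσC : ∀ x, σ x ∈ C := fun x => SetLike.coe_mem _
  have hσmk : ∀ x, A.mkQ (σ x) = ((sE (r x) : Q)) := by
    intro x
    show A.mkQ ((eC.symm (sE (r x)) : C) : V) = _
    rw [← hfCc, ← heCc, eC.apply_symm_apply]
  refine ⟨σ, fun x => hCB (hσC x), ?_, ?_⟩
  · intro x hx
    have hr0 : r x = 0 := by
      apply Subtype.ext
      rw [hr x (hAB hx), Submodule.mkQ_apply, (Submodule.Quotient.mk_eq_zero A).mpr hx]
      rfl
    show (C.subtype ∘ₗ (eC.symm : E →ₗ[K] C) ∘ₗ sE ∘ₗ r) x = 0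
    simp [LinearMap.comp_apply, hr0]
  · intro x hx
    rw [← Submodule.Quotient.mk_eq_zero A, ← Submodule.mkQ_apply]
    have hrd : r (d x) = dE (r x) := by
      apply Subtype.ext
      rw [hr (d x) (hdB x hx), hdEc, ← hdbar, ← hr x hx]
    have e1 : A.mkQ (d (σ x)) = ((dE (sE (r x)) : Q)) := by
      rw [← hdbar, hσmk, hdEc]
    have e2 : A.mkQ (σ (d x)) = ((sE (dE (r x)) : Q)) := by
      rw [hσmk, hrd]
    have e3 : A.mkQ x = ((r x : Q)) := (hr x hx).symm
    rw [map_sub, map_sub, e1, e2, e3]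
    have h4 : ((dE (sE (r x)) + sE (dE (r x)) : E) : Q) = ((r x : Q)) :=
      congrArg _ (hsE (r x))
    push_cast at h4
    rw [sub_sub, h4, sub_self]

lemma filtered_contraction {K V : Type*} [Field K] [AddCommGroup V] [Module K V]
    (d : V →ₗ[K] V) (hdd : ∀ x, d (d x) = 0)
    (G : ℤ → Submodule K V) (hmono : Monotone G) (N : ℤ)
    (hbot : G (-N) = ⊥) (htop : G N = ⊤)
    (hdG : ∀ p, ∀ x ∈ G p, d x ∈ G p)
    (hac : ∀ p, ∀ x ∈ G p, d x ∈ G (p-1) → x ∈ G (p-1) ⊔ (G p).map d) :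
    ∃ s : V →ₗ[K] V, (∀ p, ∀ x ∈ G p, s x ∈ G p) ∧ ∀ x, d (s x) + s (d x) = x := by
  by_cases hN : -N ≤ N
  · have key : ∀ p, -N ≤ p → ∃ s : V →ₗ[K] V, (∀ q, ∀ x ∈ G q, s x ∈ G q) ∧
        ∀ x ∈ G p, d (s x) + s (d x) = x := by
      refine Int.le_induction ?_ ?_
      · refine ⟨0, by simp, fun x hx => ?_⟩
        rw [hbot, Submodule.mem_bot] at hx
        subst hx; simp
      · intro p hp ih
        obtain ⟨s, hsF, hs⟩ := ih
        obtain ⟨σ, hσB, hσA, hσkey⟩ := partial_contraction d hdd (G p) (G (p+1))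
          (hmono (by linarith)) (hdG p) (hdG (p+1)) (by
            intro x hx hdx
            have := hac (p+1) x hx (by rw [show p+1-1 = p by ring]; exact hdx)
            rwa [show p+1-1 = p by ring] at this)
        set s' : V →ₗ[K] V := σ + s ∘ₗ (LinearMap.id - d ∘ₗ σ - σ ∘ₗ d) with hs'
        have hs'x : ∀ y, s' y = σ y + s (y - d (σ y) - σ (d y)) := fun y => by
          simp [hs', LinearMap.add_apply, LinearMap.comp_apply, LinearMap.sub_apply]
        refine ⟨s', ?_, ?_⟩
        · intro q x hx
          rw [hs'x]
          rcases le_or_gt q p with hq | hq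
          · have hxA : x ∈ G p := hmono hq hx
            have hdxA : d x ∈ G p := hmono hq (hdG q x hx)
            rw [hσA x hxA, hσA (d x) hdxA, map_zero]
            simpa using hsF q x hx
          · have hBq : G (p+1) ≤ G q := hmono (Int.add_one_le_iff.mpr hq)
            exact add_mem (hBq (hσB x))
              (hsF q _ (sub_mem (sub_mem hx (hdG q _ (hBq (hσB x)))) (hBq (hσB (d x)))))
        · intro x hx
          rw [hs'x x, hs'x (d x)]
          have harg : d x - d (σ (d x)) - σ (d (d x)) = d (x - d (σ x) - σ (d x)) := by
            rw [map_sub, map_sub, hdd x, map_zero, hdd (σ x)]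
            abel
          rw [harg]
          set ex := x - d (σ x) - σ (d x) with hex_eq
          have hex : ex ∈ G p := hσkey x hx
          have h5 := hs ex hex
          rw [map_add]
          have hre : d (σ x) + d (s ex) + (σ (d x) + s (d ex)) =
              (d (s ex) + s (d ex)) + (x - ex) := by
            rw [hex_eq]; abel
          rw [hre, h5]; abel
    obtain ⟨s, hsF, hs⟩ := key N hN
    exact ⟨s, hsF, fun x => hs x (by rw [htop]; trivial)⟩
  · have h1 : (⊤ : Submodule K V) ≤ ⊥ := by
      rw [← htop, ← hbot]
      exact hmono (by linarith)
    have hall : ∀ x : V, x = 0 := fun x => (Submodule.mem_bot K).mp (h1 Submodule.mem_top)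
    refine ⟨0, by simp, fun x => by rw [hall x]; simp⟩

/-- Let `(M, d)` and `(M', d')` be chain complexes of vector spaces over a field `K`
(encoded as modules with square-zero endomorphisms), each equipped with a bounded
increasing filtration by subcomplexes.  Let `φ` be a filtered chain map.  If `φ` induces
an isomorphism on the homology of the associated graded complexes (expressed elementwise:
the induced map on each graded homology `H(F_p/F_{p−1})` is injective and surjective),
then `φ` is a filtered chain homotopy equivalence: there are a filtered chain map `ψ`
in the opposite direction and filtered homotopies `h, h'` with
`ψφ − id = dh + hd` and `φψ − id = d'h' + h'd'`. -/
theorem filtered_quasi_iso_on_graded_is_filtered_homotopy_equivalence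
    {K M M' : Type*} [Field K]
    [AddCommGroup M] [Module K M] [AddCommGroup M'] [Module K M']
    (d : M →ₗ[K] M) (d' : M' →ₗ[K] M')
    (hd : d ∘ₗ d = 0) (hd' : d' ∘ₗ d' = 0)
    (F : ℤ → Submodule K M) (F' : ℤ → Submodule K M')
    (hmono : Monotone F) (hmono' : Monotone F')
    (N : ℤ)
    (hbot : ∀ p, p ≤ -N → F p = ⊥) (htop : ∀ p, N ≤ p → F p = ⊤)
    (hbot' : ∀ p, p ≤ -N → F' p = ⊥) (htop' : ∀ p, N ≤ p → F' p = ⊤)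
    (hdF : ∀ p, (F p).map d ≤ F p) (hdF' : ∀ p, (F' p).map d' ≤ F' p)
    (φ : M →ₗ[K] M')
    (hφd : d' ∘ₗ φ = φ ∘ₗ d) (hφF : ∀ p, (F p).map φ ≤ F' p)
    -- φ is surjective on the homology of the associated graded complexes:
    (hsurj : ∀ p, ∀ y ∈ F' p, d' y ∈ F' (p - 1) →
      ∃ x ∈ F p, d x ∈ F (p - 1) ∧ φ x - y ∈ F' (p - 1) ⊔ (F' p).map d')
    -- φ is injective on the homology of the associated graded complexes:
    (hinj : ∀ p, ∀ x ∈ F p, d x ∈ F (p - 1) →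
      φ x ∈ F' (p - 1) ⊔ (F' p).map d' → x ∈ F (p - 1) ⊔ (F p).map d) :
    ∃ ψ : M' →ₗ[K] M,
      d ∘ₗ ψ = ψ ∘ₗ d' ∧ (∀ p, (F' p).map ψ ≤ F p) ∧
      (∃ h : M →ₗ[K] M, (∀ p, (F p).map h ≤ F p) ∧
        ψ ∘ₗ φ - LinearMap.id = d ∘ₗ h + h ∘ₗ d) ∧
      (∃ h' : M' →ₗ[K] M', (∀ p, (F' p).map h' ≤ F' p) ∧
        φ ∘ₗ ψ - LinearMap.id = d' ∘ₗ h' + h' ∘ₗ d') := by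
  classical
  have hdd : ∀ x, d (d x) = 0 := fun x => congrFun (congrArg DFunLike.coe hd) x
  have hdd' : ∀ x, d' (d' x) = 0 := fun x => congrFun (congrArg DFunLike.coe hd') x
  have hdφ : ∀ x, d' (φ x) = φ (d x) := fun x => congrFun (congrArg DFunLike.coe hφd) x
  have hdFe : ∀ p, ∀ x ∈ F p, d x ∈ F p := fun p x hx => hdF p ⟨x, hx, rfl⟩
  have hdF'e : ∀ p, ∀ x ∈ F' p, d' x ∈ F' p := fun p x hx => hdF' p ⟨x, hx, rfl⟩
  have hφFe : ∀ p, ∀ x ∈ F p, φ x ∈ F' p := fun p x hx => hφF p ⟨x, hx, rfl⟩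
  -- the mapping cone
  set D : (M' × M) →ₗ[K] (M' × M) :=
    LinearMap.prod (d' ∘ₗ LinearMap.fst K M' M + φ ∘ₗ LinearMap.snd K M' M)
      (-(d ∘ₗ LinearMap.snd K M' M)) with hD_def
  have hDapp : ∀ v : M' × M, D v = (d' v.1 + φ v.2, -(d v.2)) := fun v => rfl
  have hDD : ∀ v, D (D v) = 0 := by
    intro v
    rw [hDapp, hDapp]
    ext
    · simp [hdd', hdφ]
    · simp [hdd]
  set G : ℤ → Submodule K (M' × M) := fun p => (F' p).prod (F p) with hG_def
  have hmemG : ∀ p (v : M' × M), v ∈ G p ↔ v.1 ∈ F' p ∧ v.2 ∈ F p := fun p v => Iff.rfl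
  have hmonoG : Monotone G := fun p q hpq v hv => ⟨hmono' hpq hv.1, hmono hpq hv.2⟩
  have hbotG : G (-N) = ⊥ := by
    ext v
    rw [hmemG, hbot (-N) le_rfl, hbot' (-N) le_rfl]
    simp [Prod.ext_iff]
  have htopG : G N = ⊤ := by
    ext v
    rw [hmemG, htop N le_rfl, htop' N le_rfl]
    simp
  have hdGe : ∀ p, ∀ v ∈ G p, D v ∈ G p := by
    intro p v hv
    rw [hDapp]
    exact ⟨add_mem (hdF'e p _ hv.1) (hφFe p _ hv.2), neg_mem (hdFe p _ hv.2)⟩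
  -- acyclicity of the graded cone
  have hacG : ∀ p, ∀ v ∈ G p, D v ∈ G (p-1) → v ∈ G (p-1) ⊔ (G p).map D := by
    intro p v hv hdv
    obtain ⟨hx', hx⟩ := hv
    rw [hDapp] at hdv
    obtain ⟨hd1, hd2⟩ := hdv
    have hdx : d v.2 ∈ F (p-1) := by simpa using neg_mem hd2
    have hφx : φ v.2 ∈ F' (p-1) ⊔ (F' p).map d' :=
      Submodule.mem_sup.mpr ⟨d' v.1 + φ v.2, hd1, -(d' v.1),
        ⟨-v.1, neg_mem hx', by rw [map_neg]⟩, by abel⟩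
    obtain ⟨a, ha, w, hw, hsum⟩ := Submodule.mem_sup.mp (hinj p v.2 hx hdx hφx)
    obtain ⟨c, hc, rfl⟩ := Submodule.mem_map.mp hw
    have hdc : d c = v.2 - a := by rw [← hsum]; abel
    have hy : v.1 + φ c ∈ F' p := add_mem hx' (hφFe p c hc)
    have hdy : d' (v.1 + φ c) ∈ F' (p-1) := by
      have : d' (v.1 + φ c) = (d' v.1 + φ v.2) - φ a := by
        rw [map_add, hdφ c, hdc, map_sub]
        abel
      rw [this]
      exact sub_mem hd1 (hφFe (p-1) a ha)
    obtain ⟨z, hz, hdz, hzy⟩ := hsurj p (v.1 + φ c) hy hdy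
    obtain ⟨a2, ha2, w2, hw2, hsum2⟩ := Submodule.mem_sup.mp hzy
    obtain ⟨w', hw', rfl⟩ := Submodule.mem_map.mp hw2
    refine Submodule.mem_sup.mpr ⟨(-a2, a + d z), ⟨neg_mem ha2, add_mem ha hdz⟩,
      D (-w', z - c), ⟨(-w', z - c), ⟨neg_mem hw', sub_mem hz hc⟩, rfl⟩, ?_⟩
    rw [hDapp]
    have e1 : a2 + d' w' = φ z - (v.1 + φ c) := hsum2
    ext
    · show -a2 + (d' (-w') + φ (z - c)) = v.1
      rw [map_neg, map_sub]
      have h9 : -a2 + (-(d' w') + (φ z - φ c)) = -(a2 + d' w') + (φ z - φ c) := by abel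
      rw [h9, e1]
      abel
    · show (a + d z) + -(d (z - c)) = v.2
      rw [map_sub, hdc]
      abel
  -- filtered contraction of the cone
  obtain ⟨S, hSF, hS⟩ := filtered_contraction D hDD G hmonoG N hbotG htopG hdGe hacG
  -- extract the components
  set ψ : M' →ₗ[K] M := LinearMap.snd K M' M ∘ₗ S ∘ₗ LinearMap.inl K M' M with hψ_def
  set α : M' →ₗ[K] M' := LinearMap.fst K M' M ∘ₗ S ∘ₗ LinearMap.inl K M' M with hα_def
  set β : M →ₗ[K] M' := LinearMap.fst K M' M ∘ₗ S ∘ₗ LinearMap.inr K M' M with hβ_def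
  set γ : M →ₗ[K] M := LinearMap.snd K M' M ∘ₗ S ∘ₗ LinearMap.inr K M' M with hγ_def
  have hSv : ∀ (u : M') (w : M), S (u, w) = (α u + β w, ψ u + γ w) := by
    intro u w
    have h1 : ((u, w) : M' × M) = (u, 0) + (0, w) := by simp
    rw [h1, map_add]
    rfl
  have hI : ∀ x' : M',
      (d' (α x') + φ (ψ x')) + (α (d' x') + β 0) = x' ∧
      -(d (ψ x')) + (ψ (d' x') + γ 0) = 0 := by
    intro x'
    have h0 := hS (x', 0)
    rw [hDapp, hSv x' 0, hDapp] at h0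
    simp only [map_zero, add_zero, neg_zero] at h0
    rw [hSv (d' x') 0] at h0
    rw [Prod.mk_add_mk, Prod.mk.injEq] at h0
    exact h0
  have hII : ∀ x : M,
      -(d (ψ 0 + γ x)) + (ψ (d' 0 + φ x) + γ (-(d x))) = x := by
    intro x
    have h0 := hS (0, x)
    rw [hDapp, hSv 0 x, hDapp] at h0
    rw [hSv (d' 0 + φ x) (-(d x))] at h0
    rw [Prod.mk_add_mk, Prod.mk.injEq] at h0
    simpa using h0.2
  refine ⟨ψ, ?_, ?_, ⟨γ, ?_, ?_⟩, ⟨-α, ?_, ?_⟩⟩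
  · ext x'
    have h := (hI x').2
    simp only [map_zero, add_zero] at h
    simp only [LinearMap.comp_apply]
    have h2 : ψ (d' x') - d (ψ x') = 0 := by rw [← h]; abel
    rw [eq_comm, ← sub_eq_zero]
    exact h2
  · intro p
    rintro y ⟨x', hx', rfl⟩
    exact (hSF p (x', 0) ⟨hx', zero_mem _⟩).2
  · intro p
    rintro y ⟨x, hx, rfl⟩
    exact (hSF p (0, x) ⟨zero_mem _, hx⟩).2
  · ext x
    have h := hII x
    simp only [map_zero, zero_add, map_neg] at h
    simp only [LinearMap.sub_apply, LinearMap.comp_apply, LinearMap.add_apply,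
      LinearMap.id_apply]
    set u := ψ (φ x) with hu
    set a := d (γ x) with ha
    set b := γ (d x) with hb
    rw [← h]
    abel
  · intro p
    rintro y ⟨x', hx', rfl⟩
    have : (-α) x' = -(α x') := rfl
    rw [this]
    exact neg_mem (hSF p (x', 0) ⟨hx', zero_mem _⟩).1
  · ext x'
    have h := (hI x').1
    simp only [map_zero, add_zero] at h
    simp only [LinearMap.sub_apply, LinearMap.comp_apply, LinearMap.add_apply,
      LinearMap.id_apply, LinearMap.neg_apply, map_neg]
    set u := φ (ψ x') with hu
    set a := d' (α x') with ha
    set b := α (d' x') with hb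
    rw [← h]
    abel
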